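/- There exist unique elements a₂, a₃, b₃, a₄, h₁, h₃ ∈ R such that, setting U₋₂ = λ⁻¹·diag(−a₂, a₂), U₋₃ = a₃·λ⁻¹·E₁₂ + b₃·λ⁻²·E₂₁, and U₋₄ = λ⁻²·diag(−a₄, a₄), the following hold: (i) [U₋₂, Λ] − (h₁/2)·λ⁻¹·Λ = −u⁽⁰⁾·E₁₂; (ii) [U₋₃, Λ] = ∂ₓU₋₂, where ∂ₓ is applied coefficientwise to the matrix entries; (iii) ω(U₋₃, λΛ) = 0; (iv) [U₋₄, Λ] + (1/2)·[U₋₂, [U₋₂, Λ]] − ∂ₓU₋₃ − (h₁/2)·[U₋₂, λ⁻¹Λ] − (h₃/2)·λ⁻²·Λ = 0. Moreover, for this unique solution, h₁ = u⁽⁰⁾ and h₃ = (u⁽⁰⁾)²/4 + u⁽²⁾/12. -/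

import Mathlib

/-!
Setup of Example 5.1 of the paper: `R = ℂ[u⁽⁰⁾, u⁽¹⁾, u⁽²⁾, …]` is the
differential polynomial ring of the KdV variable (formalized as
`MvPolynomial ℕ ℂ`, with `u⁽ᵐ⁾ = X m`), with the derivation `∂ₓ : u⁽ᵐ⁾ ↦ u⁽ᵐ⁺¹⁾`;
`2×2` matrices over `R[λ,λ⁻¹]` with commutator bracket; `Λ = λE₁₂ + E₂₁` (so
`Λ² = λI`); and the cocycle `ω(X,Y) = Res_λ tr((dX/dλ)·Y) ∈ R`.
-/

open LaurentPolynomial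

noncomputable section

/-- The differential polynomial ring `R = ℂ[u⁽⁰⁾, u⁽¹⁾, …]`. -/
abbrev DP := MvPolynomial ℕ ℂ

/-- The derivation `∂ₓ` with `∂ₓ(u⁽ᵐ⁾) = u⁽ᵐ⁺¹⁾`. -/
noncomputable def dx : Derivation ℂ DP DP :=
  MvPolynomial.mkDerivation ℂ fun n => MvPolynomial.X (n + 1)

/-- `∂ₓ` applied coefficientwise to Laurent polynomials. -/
noncomputable def DXl (f : LaurentPolynomial DP) : LaurentPolynomial DP :=
  AddMonoidAlgebra.ofCoeff (Finsupp.mapRange (fun a => dx a) (by simp) f.coeff)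

/-- The formal derivative `d/dλ` on `R[λ,λ⁻¹]`. -/
noncomputable def lderivR (f : LaurentPolynomial DP) : LaurentPolynomial DP :=
  Finsupp.sum f.coeff fun n a => (n : ℤ) • (LaurentPolynomial.C a * T (n - 1))

/-- The residue: the coefficient of `λ⁻¹`. -/
noncomputable def resR (f : LaurentPolynomial DP) : DP := f.coeff (-1)

/-- The cocycle `ω(X,Y) = Res_λ tr((dX/dλ)·Y) ∈ R`. -/
noncomputable def omegaR (X Y : Matrix (Fin 2) (Fin 2) (LaurentPolynomial DP)) : DP :=
  resR (Matrix.trace ((X.map lderivR) * Y))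

/-- Matrix units. -/
noncomputable def Eu (i j : Fin 2) : Matrix (Fin 2) (Fin 2) (LaurentPolynomial DP) :=
  Matrix.single i j 1

/-- `Λ = λE₁₂ + E₂₁`. -/
noncomputable def Lam : Matrix (Fin 2) (Fin 2) (LaurentPolynomial DP) :=
  (T 1 : LaurentPolynomial DP) • Eu 0 1 + Eu 1 0

/-- Matrix commutator. -/
noncomputable def mCom (A B : Matrix (Fin 2) (Fin 2) (LaurentPolynomial DP)) :
    Matrix (Fin 2) (Fin 2) (LaurentPolynomial DP) := A * B - B * A

/-- `U₋₂ = λ⁻¹·diag(-a₂, a₂)`. -/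
noncomputable def Um2 (a₂ : DP) : Matrix (Fin 2) (Fin 2) (LaurentPolynomial DP) :=
  Matrix.diagonal ![-(LaurentPolynomial.C a₂ * T (-1)), LaurentPolynomial.C a₂ * T (-1)]

/-- `U₋₃ = a₃·λ⁻¹·E₁₂ + b₃·λ⁻²·E₂₁`. -/
noncomputable def Um3 (a₃ b₃ : DP) : Matrix (Fin 2) (Fin 2) (LaurentPolynomial DP) :=
  (LaurentPolynomial.C a₃ * T (-1)) • Eu 0 1 + (LaurentPolynomial.C b₃ * T (-2)) • Eu 1 0

/-- `U₋₄ = λ⁻²·diag(-a₄, a₄)`. -/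
noncomputable def Um4 (a₄ : DP) : Matrix (Fin 2) (Fin 2) (LaurentPolynomial DP) :=
  Matrix.diagonal ![-(LaurentPolynomial.C a₄ * T (-2)), LaurentPolynomial.C a₄ * T (-2)]

/-- `1/2 ∈ R`. -/
noncomputable def halfR : DP := MvPolynomial.C (2⁻¹ : ℂ)

/-- The system of graded equations (i)–(iv) of Example 5.1 of the paper. -/
def kdvSystem (a₂ a₃ b₃ a₄ h₁ h₃ : DP) : Prop :=
  (mCom (Um2 a₂) Lam - (LaurentPolynomial.C (halfR * h₁) * T (-1)) • Lam
      = -(LaurentPolynomial.C (MvPolynomial.X 0 : DP) • Eu 0 1)) ∧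
  (mCom (Um3 a₃ b₃) Lam = (Um2 a₂).map DXl) ∧
  (omegaR (Um3 a₃ b₃) ((T 1 : LaurentPolynomial DP) • Lam) = 0) ∧
  (mCom (Um4 a₄) Lam
      + LaurentPolynomial.C halfR • mCom (Um2 a₂) (mCom (Um2 a₂) Lam)
      - (Um3 a₃ b₃).map DXl
      - LaurentPolynomial.C (halfR * h₁) • mCom (Um2 a₂) ((T (-1) : LaurentPolynomial DP) • Lam)
      - (LaurentPolynomial.C (halfR * h₃) * T (-2)) • Lam
      = 0)

open LaurentPolynomial

namespace KdVAux

abbrev L := LaurentPolynomial DP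
noncomputable abbrev LC : DP →+* L := LaurentPolynomial.C

lemma single_CT (a : DP) (n : ℤ) : (AddMonoidAlgebra.single n a : L) = LC a * T n :=
  single_eq_C_mul_T a n

-- product normalization
lemma n1 (x y : L) : -x * y = -(x * y) := neg_mul x y
lemma n2 (x y : L) : x * -y = -(x * y) := mul_neg x y
lemma n3 (a b : DP) (m n : ℤ) : (LC a * T m) * (LC b * T n) = LC (a * b) * T (m + n) := by
  rw [← single_CT, ← single_CT, ← single_CT]
  exact AddMonoidAlgebra.single_mul_single m n a b
lemma n4 (a : DP) (m n : ℤ) : (LC a * T m) * T n = LC a * T (m + n) := mul_T_assoc _ m n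
lemma n5 (a : DP) (m n : ℤ) : T n * (LC a * T m) = LC a * T (m + n) := by
  rw [T_mul]; exact n4 a m n
lemma n6 (m n : ℤ) : (T m : L) * T n = T (m + n) := (T_add m n).symm
lemma n7 (a b : DP) (n : ℤ) : LC a * (LC b * T n) = LC (a * b) * T n := by
  rw [← mul_assoc, ← map_mul]
lemma n8 (a b : DP) (n : ℤ) : (LC a * T n) * LC b = LC (a * b) * T n := by
  rw [mul_comm (LC a * T n) (LC b), n7, mul_comm b a]
lemma n9 (a b : DP) : LC a * LC b = LC (a * b) := (map_mul _ a b).symm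
lemma n10 (a : DP) (n : ℤ) : (T n : L) * LC a = LC a * T n := T_mul n _
-- neg push-in
lemma n11 (a : DP) (n : ℤ) : -(LC a * T n) = LC (-a) * T n := by
  rw [map_neg, n1]
lemma n12 (a : DP) : -(LC a : L) = LC (-a) := (map_neg _ a).symm
-- additive collection
lemma n13 (a b : DP) (n : ℤ) : LC a * T n + LC b * T n = LC (a + b) * T n := by
  rw [map_add, add_mul]
lemma n14 (a b : DP) (n : ℤ) : LC a * T n - LC b * T n = LC (a - b) * T n := by
  rw [map_sub, sub_mul]
lemma n15 (a b : DP) : (LC a : L) + LC b = LC (a + b) := (map_add _ a b).symm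
lemma n16 (a b : DP) : (LC a : L) - LC b = LC (a - b) := (map_sub _ a b).symm
lemma n17 (x y z : L) : x * (y + z) = x * y + x * z := mul_add x y z
lemma n18 (x y z : L) : x * (y - z) = x * y - x * z := mul_sub x y z
lemma n19 (x y z : L) : (x + y) * z = x * z + y * z := add_mul x y z
lemma n20 (x y z : L) : (x - y) * z = x * z - y * z := sub_mul x y z
-- equations to scalars
@[simp] lemma q1 (a b : DP) (n : ℤ) : LC a * T n = LC b * T n ↔ a = b := by
  rw [← single_CT, ← single_CT]
  exact ⟨fun h => AddMonoidAlgebra.single_right_injective h, fun h => by rw [h]⟩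
@[simp] lemma q2 (a : DP) (n : ℤ) : LC a * T n = 0 ↔ a = 0 := by
  rw [← single_CT]; exact AddMonoidAlgebra.single_eq_zero
@[simp] lemma q3 (a b : DP) : (LC a : L) = LC b ↔ a = b := by
  rw [← single_eq_C, ← single_eq_C]
  exact ⟨fun h => AddMonoidAlgebra.single_right_injective h, fun h => by rw [h]⟩
@[simp] lemma q4 (a : DP) : (LC a : L) = 0 ↔ a = 0 := by
  rw [← single_eq_C]; exact AddMonoidAlgebra.single_eq_zero

end KdVAux

namespace KdVAux
open MvPolynomial

lemma dx_X (n : ℕ) : dx (MvPolynomial.X n) = MvPolynomial.X (n + 1) := by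
  simp [dx, MvPolynomial.mkDerivation_X]

lemma dx_CX (c : ℂ) (n : ℕ) :
    dx (MvPolynomial.C c * MvPolynomial.X n) = MvPolynomial.C c * MvPolynomial.X (n + 1) := by
  rw [← MvPolynomial.smul_eq_C_mul, ← MvPolynomial.smul_eq_C_mul]
  rw [Derivation.map_smul, dx_X]

lemma DXl_single (a : DP) (n : ℤ) :
    DXl (AddMonoidAlgebra.single n a) = AddMonoidAlgebra.single n (dx a) :=
  congrArg AddMonoidAlgebra.ofCoeff Finsupp.mapRange_single

lemma DXl_CT (a : DP) (n : ℤ) : DXl (LC a * T n) = LC (dx a) * T n := by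
  rw [← single_CT, ← single_CT, DXl_single]

lemma DXl_neg (x : L) : DXl (-x) = -DXl x := by
  refine LaurentPolynomial.ext fun k => ?_
  show dx ((-x).coeff k) = -(dx (x.coeff k))
  rw [show (-x).coeff k = -(x.coeff k) from rfl, map_neg]

lemma DXl_zero : DXl 0 = 0 := congrArg AddMonoidAlgebra.ofCoeff Finsupp.mapRange_zero

lemma lderivR_CT (a : DP) (n : ℤ) : lderivR (LC a * T n) = LC ((n : ℤ) • a) * T (n - 1) := by
  rw [← single_CT]
  unfold lderivR
  rw [AddMonoidAlgebra.coeff_single, Finsupp.sum_single_index (by simp)]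
  rw [map_zsmul, smul_mul_assoc]

@[simp] lemma resR_CT (a : DP) (n : ℤ) : resR (LC a * T n) = if n = -1 then a else 0 := by
  rw [← single_CT]
  exact Finsupp.single_apply (a := n) (a' := -1)

lemma resR_add (x y : L) : resR (x + y) = resR x + resR y := Finsupp.add_apply x.coeff y.coeff (-1)
lemma resR_neg (x : L) : resR (-x) = -resR x := Finsupp.neg_apply x.coeff (-1)
lemma resR_sub (x y : L) : resR (x - y) = resR x - resR y := Finsupp.sub_apply x.coeff y.coeff (-1)
lemma resR_zero : resR (0 : L) = 0 := rfl

lemma cNum (c : ℂ) (n : ℕ) [n.AtLeastTwo] :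
    (MvPolynomial.C c : DP) * (OfNat.ofNat n) = MvPolynomial.C (c * OfNat.ofNat n) := by
  rw [← map_ofNat (MvPolynomial.C : ℂ →+* DP) n, ← map_mul]

end KdVAux
namespace KdVAux
open MvPolynomial

lemma halfR_eq : halfR = MvPolynomial.C (2⁻¹ : ℂ) := rfl

lemma c2 : (MvPolynomial.C (2⁻¹ : ℂ) : DP) * 2 = 1 := by rw [cNum]; norm_num
lemma c3 : (MvPolynomial.C (3⁻¹ : ℂ) : DP) * 3 = 1 := by rw [cNum]; norm_num
lemma c4 : (MvPolynomial.C (4⁻¹ : ℂ) : DP) * 4 = 1 := by rw [cNum]; norm_num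
lemma rc : (MvPolynomial.C (3⁻¹ : ℂ) : DP) * MvPolynomial.C (4⁻¹ : ℂ)
    = MvPolynomial.C (12⁻¹ : ℂ) := by rw [← map_mul]; norm_num
lemma r6 : (2 : DP) * MvPolynomial.C (12⁻¹ : ℂ) = MvPolynomial.C (6⁻¹ : ℂ) := by
  rw [mul_comm, cNum]; norm_num
lemma r8 : (8 : DP) * MvPolynomial.C (2⁻¹ : ℂ)
    * (MvPolynomial.C (4⁻¹ : ℂ) * MvPolynomial.C (4⁻¹ : ℂ)) = MvPolynomial.C (4⁻¹ : ℂ) := by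
  rw [mul_comm (8 : DP) _, cNum, ← map_mul, ← map_mul]; norm_num
lemma rw1 : MvPolynomial.C (4⁻¹ : ℂ) * ((MvPolynomial.C (12⁻¹ : ℂ) : DP)
    + MvPolynomial.C (6⁻¹ : ℂ)) = MvPolynomial.C (16⁻¹ : ℂ) := by
  rw [← map_add, ← map_mul]; norm_num
lemma rw2 : (4 : DP) * MvPolynomial.C (2⁻¹ : ℂ)
    * (MvPolynomial.C (4⁻¹ : ℂ) * MvPolynomial.C (4⁻¹ : ℂ)) = MvPolynomial.C (8⁻¹ : ℂ) := by
  rw [mul_comm (4 : DP) _, cNum, ← map_mul, ← map_mul]; norm_num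
lemma rh : (2 : DP) * MvPolynomial.C (4⁻¹ : ℂ) = MvPolynomial.C (2⁻¹ : ℂ) := by
  rw [mul_comm, cNum]; norm_num
lemma rst : (MvPolynomial.C (6⁻¹ : ℂ) : DP) + MvPolynomial.C (12⁻¹ : ℂ)
    = MvPolynomial.C (4⁻¹ : ℂ) := by rw [← map_add]; norm_num [MvPolynomial.C_inj]
lemma rA : (MvPolynomial.C (2⁻¹ : ℂ) : DP) * MvPolynomial.C (4⁻¹ : ℂ)
    = MvPolynomial.C (8⁻¹ : ℂ) := by rw [← map_mul]; norm_num
lemma rB : (MvPolynomial.C (2⁻¹ : ℂ) : DP) * MvPolynomial.C (12⁻¹ : ℂ)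
    = MvPolynomial.C (24⁻¹ : ℂ) := by rw [← map_mul]; norm_num
lemma rC : (MvPolynomial.C (2⁻¹ : ℂ) : DP)
    * (MvPolynomial.C (4⁻¹ : ℂ) * MvPolynomial.C (4⁻¹ : ℂ))
    = MvPolynomial.C (32⁻¹ : ℂ) := by rw [← map_mul, ← map_mul]; norm_num
lemma rD : (MvPolynomial.C (6⁻¹ : ℂ) : DP) - MvPolynomial.C (24⁻¹ : ℂ)
    = (2 : DP) * MvPolynomial.C (16⁻¹ : ℂ) := by
  rw [← map_sub, mul_comm, cNum]; norm_num [MvPolynomial.C_inj]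
lemma rF : (4 : DP) * MvPolynomial.C (32⁻¹ : ℂ) = MvPolynomial.C (8⁻¹ : ℂ) := by
  rw [mul_comm, cNum]; norm_num
lemma rI : (2 : DP) * MvPolynomial.C (16⁻¹ : ℂ)
    = (MvPolynomial.C (12⁻¹ : ℂ) : DP) + MvPolynomial.C (24⁻¹ : ℂ) := by
  rw [mul_comm, cNum, ← map_add]; norm_num [MvPolynomial.C_inj]

lemma dx01 (c : ℂ) : dx (MvPolynomial.C c * MvPolynomial.X 0)
    = MvPolynomial.C c * MvPolynomial.X 1 := dx_CX c 0
lemma dx12 (c : ℂ) : dx (MvPolynomial.C c * MvPolynomial.X 1)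
    = MvPolynomial.C c * MvPolynomial.X 2 := dx_CX c 1

end KdVAux

open LaurentPolynomial MvPolynomial KdVAux

set_option maxRecDepth 10000 in
lemma kdv_eqI (a₂ h₁ : DP)
    (H1 : -a₂ - a₂ - MvPolynomial.C (2⁻¹ : ℂ) * h₁ = -MvPolynomial.X 0)
    (H2 : a₂ + a₂ - MvPolynomial.C (2⁻¹ : ℂ) * h₁ = 0) :
    mCom (Um2 a₂) Lam - (LaurentPolynomial.C (halfR * h₁) * T (-1)) • Lam
      = -(LaurentPolynomial.C (MvPolynomial.X 0 : DP) • Eu 0 1) := by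
  rw [← Matrix.ext_iff]
  simp only [Fin.forall_fin_two]
  refine ⟨⟨?_, ?_⟩, ?_, ?_⟩ <;>
    (try simp [mCom, Um2, Lam, Eu, Matrix.mul_apply, Fin.sum_univ_two, Matrix.single,
      Matrix.diagonal]) <;>
    (try simp only [n1, n2, n3, n4, n5, n6, n7, n8, n9, n10, n11, n12, n13, n14, n15, n16,
      n17, n18, n19, n20, one_mul,
      Int.reduceAdd, Int.reduceNeg, T_zero, mul_one, q1, q2, q3, q4]) <;>
    (first
      | rfl
      | linear_combination H1 - h₁ * halfR_eq
      | linear_combination H2 - h₁ * halfR_eq)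

set_option maxRecDepth 10000 in
lemma kdv_eqII (a₂ a₃ b₃ : DP) (H : a₃ - b₃ = -dx a₂) :
    mCom (Um3 a₃ b₃) Lam = (Um2 a₂).map DXl := by
  rw [← Matrix.ext_iff]
  simp only [Fin.forall_fin_two]
  refine ⟨⟨?_, ?_⟩, ?_, ?_⟩ <;>
    (try simp [mCom, Um2, Um3, Lam, Eu, Matrix.mul_apply, Fin.sum_univ_two,
      Matrix.single, Matrix.diagonal, Matrix.map_apply, DXl_CT, DXl_neg]) <;>
    (try simp only [n1, n2, n3, n4, n5, n6, n7, n8, n9, n10, n11, n12, n13, n14, n15, n16,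
      n17, n18, n19, n20, one_mul,
      Int.reduceAdd, Int.reduceNeg, T_zero, mul_one, q1, q2, q3, q4]) <;>
    (first
      | rfl
      | linear_combination H
      | linear_combination -H)

set_option maxRecDepth 10000 in
lemma kdv_eqIII (a₃ b₃ : DP) (H : -a₃ + -(2 * b₃) = 0) :
    omegaR (Um3 a₃ b₃) ((T 1 : LaurentPolynomial DP) • Lam) = 0 := by
  simp only [omegaR, Um3, Lam, Eu, Matrix.map_apply, Matrix.trace, Matrix.diag,
    Fin.sum_univ_two, Matrix.mul_apply, Matrix.smul_apply, Matrix.add_apply,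
    Matrix.single, smul_eq_mul]
  simp [lderivR_CT]
  simp only [n1, n2, n3, n4, n5, n6, n7, n8, n9, n10, n11, n12, n13, n14, n15, n16,
    n17, n18, n19, n20, one_mul,
    Int.reduceAdd, Int.reduceNeg, T_zero, mul_one, resR_CT, resR_add, resR_sub, resR_neg,
    reduceIte, q1, q2, q3, q4]
  linear_combination H

set_option maxRecDepth 10000 in
set_option maxHeartbeats 1000000 in
lemma kdv_eqIV (a₂ a₃ b₃ a₄ h₁ h₃ : DP)
    (H5 : -a₄ - a₄ + MvPolynomial.C (2⁻¹ : ℂ) * (-a₂ * (-a₂ - a₂) - (-a₂ - a₂) * a₂)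
        - dx a₃ - MvPolynomial.C (2⁻¹ : ℂ) * h₁ * (-a₂ - a₂)
        - MvPolynomial.C (2⁻¹ : ℂ) * h₃ = 0)
    (H6 : a₄ - -a₄ + MvPolynomial.C (2⁻¹ : ℂ) * (a₂ * (a₂ - -a₂) - (a₂ - -a₂) * -a₂)
        - dx b₃ - MvPolynomial.C (2⁻¹ : ℂ) * h₁ * (a₂ - -a₂)
        - MvPolynomial.C (2⁻¹ : ℂ) * h₃ = 0) :
    mCom (Um4 a₄) Lam
      + LaurentPolynomial.C halfR • mCom (Um2 a₂) (mCom (Um2 a₂) Lam)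
      - (Um3 a₃ b₃).map DXl
      - LaurentPolynomial.C (halfR * h₁) • mCom (Um2 a₂) ((T (-1) : LaurentPolynomial DP) • Lam)
      - (LaurentPolynomial.C (halfR * h₃) * T (-2)) • Lam
      = 0 := by
  rw [← Matrix.ext_iff]
  simp only [Fin.forall_fin_two]
  refine ⟨⟨?_, ?_⟩, ?_, ?_⟩ <;>
    (try simp only [mCom, Um2, Um3, Um4, Lam, Eu, Matrix.mul_apply, Fin.sum_univ_two,
      Matrix.single, Matrix.diagonal, Matrix.map_apply, Matrix.sub_apply,
      Matrix.add_apply, Matrix.smul_apply, Matrix.neg_apply, Matrix.zero_apply, Matrix.of_apply,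
      Matrix.cons_val', Matrix.cons_val_zero, Matrix.cons_val_one, Matrix.head_cons,
      Matrix.empty_val', Matrix.cons_val_fin_one, Matrix.head_fin_const, Fin.isValue,
      smul_eq_mul, DXl_neg, DXl_CT, mul_zero, zero_mul, mul_one, one_mul, add_zero, zero_add,
      sub_zero, zero_sub, neg_zero, ite_true, ite_false, reduceCtorEq, Fin.zero_eq_one_iff,
      Fin.one_eq_zero_iff, ne_eq, OfNat.ofNat_ne_one, not_false_eq_true, and_self, and_true,
      true_and, if_true, if_false, reduceIte, one_ne_zero, DXl_zero]) <;>
    (try simp only [n1, n2, n3, n4, n5, n6, n7, n8, n9, n10, n11, n12, n13, n14, n15, n16,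
      n17, n18, n19, n20, one_mul,
      Int.reduceAdd, Int.reduceNeg, T_zero, mul_one, q1, q2, q3, q4]) <;>
    (first
      | rfl
      | linear_combination H5 + (4 * a₂ ^ 2 + 2 * h₁ * a₂ - h₃) * halfR_eq
      | linear_combination H6 + (4 * a₂ ^ 2 - 2 * h₁ * a₂ - h₃) * halfR_eq)

set_option maxRecDepth 10000 in
lemma kdv_char (a₂ a₃ b₃ a₄ h₁ h₃ : DP) :
    kdvSystem a₂ a₃ b₃ a₄ h₁ h₃ ↔
      (a₂ = MvPolynomial.C (4⁻¹ : ℂ) * MvPolynomial.X 0 ∧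
       a₃ = -(MvPolynomial.C (6⁻¹ : ℂ) * MvPolynomial.X 1) ∧
       b₃ = MvPolynomial.C (12⁻¹ : ℂ) * MvPolynomial.X 1 ∧
       a₄ = MvPolynomial.C (16⁻¹ : ℂ) * MvPolynomial.X 2
          + MvPolynomial.C (8⁻¹ : ℂ) * (MvPolynomial.X 0) ^ 2 ∧
       h₁ = MvPolynomial.X 0 ∧
       h₃ = MvPolynomial.C (4⁻¹ : ℂ) * (MvPolynomial.X 0) ^ 2
          + MvPolynomial.C (12⁻¹ : ℂ) * MvPolynomial.X 2) := by
  constructor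
  · rintro ⟨hi, hii, hiii, hiv⟩
    rw [← Matrix.ext_iff] at hi hii hiv
    have e1 := hi 0 1
    have e2 := hi 1 0
    have e3 := hii 0 0
    have e5 := hiv 0 1
    have e6 := hiv 1 0
    simp [mCom, Um2, Um3, Lam, Eu, Matrix.mul_apply, Fin.sum_univ_two, Matrix.single,
      Matrix.diagonal, Matrix.map_apply, DXl_CT, DXl_neg] at e1 e2 e3
    simp only [n1, n2, n3, n4, n5, n6, n7, n8, n9, n10, n11, n12, n13, n14, n15, n16,
      n17, n18, n19, n20, one_mul,
      Int.reduceAdd, Int.reduceNeg, T_zero, mul_one, q1, q2, q3, q4] at e1 e2 e3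
    simp only [omegaR, Um3, Lam, Eu, Matrix.map_apply, Matrix.trace, Matrix.diag,
      Fin.sum_univ_two, Matrix.mul_apply, Matrix.smul_apply, Matrix.add_apply,
      Matrix.single, smul_eq_mul] at hiii
    simp [lderivR_CT] at hiii
    simp only [n1, n2, n3, n4, n5, n6, n7, n8, n9, n10, n11, n12, n13, n14, n15, n16,
      n17, n18, n19, n20, one_mul,
      Int.reduceAdd, Int.reduceNeg, T_zero, mul_one, resR_CT, resR_add, resR_sub, resR_neg,
      reduceIte, q1, q2, q3, q4] at hiii
    simp only [mCom, Um2, Um3, Um4, Lam, Eu, Matrix.mul_apply, Fin.sum_univ_two,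
      Matrix.single, Matrix.diagonal, Matrix.map_apply, Matrix.sub_apply,
      Matrix.add_apply, Matrix.smul_apply, Matrix.neg_apply, Matrix.zero_apply, Matrix.of_apply,
      Matrix.cons_val', Matrix.cons_val_zero, Matrix.cons_val_one, Matrix.head_cons,
      Matrix.empty_val', Matrix.cons_val_fin_one, Matrix.head_fin_const, Fin.isValue,
      smul_eq_mul, DXl_neg, DXl_CT, mul_zero, zero_mul, mul_one, one_mul, add_zero, zero_add,
      sub_zero, zero_sub, neg_zero, ite_true, ite_false, reduceCtorEq, Fin.zero_eq_one_iff,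
      Fin.one_eq_zero_iff, ne_eq, OfNat.ofNat_ne_one, not_false_eq_true, and_self, and_true,
      true_and, if_true, if_false, reduceIte, one_ne_zero] at e5 e6
    simp only [n1, n2, n3, n4, n5, n6, n7, n8, n9, n10, n11, n12, n13, n14, n15, n16,
      n17, n18, n19, n20, one_mul,
      Int.reduceAdd, Int.reduceNeg, T_zero, mul_one, q1, q2, q3, q4] at e5 e6
    rw [halfR_eq] at e1 e2 e5 e6
    have ha2 : a₂ = MvPolynomial.C (4⁻¹ : ℂ) * MvPolynomial.X 0 := by
      have m1 : (4 : DP) * a₂ = MvPolynomial.X 0 := by linear_combination e2 - e1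
      linear_combination MvPolynomial.C (4⁻¹ : ℂ) * m1 - a₂ * c4
    have hh1 : h₁ = MvPolynomial.X 0 := by
      linear_combination -e1 - e2 - h₁ * c2
    have hda2 : dx a₂ = MvPolynomial.C (4⁻¹ : ℂ) * MvPolynomial.X 1 := by
      rw [ha2, dx01]
    rw [hda2] at e3
    have hb3 : b₃ = MvPolynomial.C (12⁻¹ : ℂ) * MvPolynomial.X 1 := by
      have m3 : (3 : DP) * b₃ = MvPolynomial.C (4⁻¹ : ℂ) * MvPolynomial.X 1 := by
        linear_combination -e3 - hiii
      linear_combination MvPolynomial.C (3⁻¹ : ℂ) * m3 - b₃ * c3 + (MvPolynomial.X 1) * rc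
    have ha3 : a₃ = -(MvPolynomial.C (6⁻¹ : ℂ) * MvPolynomial.X 1) := by
      rw [hb3] at hiii
      linear_combination -hiii - (MvPolynomial.X 1) * r6
    have hda3 : dx a₃ = -(MvPolynomial.C (6⁻¹ : ℂ) * MvPolynomial.X 2) := by
      rw [ha3, map_neg, dx12]
    have hdb3 : dx b₃ = MvPolynomial.C (12⁻¹ : ℂ) * MvPolynomial.X 2 := by
      rw [hb3, dx12]
    rw [ha2, hh1, hda3] at e5
    rw [ha2, hh1, hdb3] at e6
    have hh3 : h₃ = MvPolynomial.C (4⁻¹ : ℂ) * (MvPolynomial.X 0) ^ 2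
        + MvPolynomial.C (12⁻¹ : ℂ) * MvPolynomial.X 2 := by
      linear_combination -e5 - e6 - h₃ * c2 + (MvPolynomial.X 0 ^ 2) * r8
        - (MvPolynomial.X 2) * r6
    have ha4 : a₄ = MvPolynomial.C (16⁻¹ : ℂ) * MvPolynomial.X 2
        + MvPolynomial.C (8⁻¹ : ℂ) * (MvPolynomial.X 0) ^ 2 := by
      linear_combination MvPolynomial.C (4⁻¹ : ℂ) * e6 - MvPolynomial.C (4⁻¹ : ℂ) * e5
        - a₄ * c4 + (MvPolynomial.X 2) * rw1 + (MvPolynomial.X 0 ^ 2) * rw2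
    exact ⟨ha2, ha3, hb3, ha4, hh1, hh3⟩
  · rintro ⟨ha2, ha3, hb3, ha4, hh1, hh3⟩
    subst ha2 ha3 hb3 ha4 hh1 hh3
    refine ⟨kdv_eqI _ _ ?_ ?_, kdv_eqII _ _ _ ?_, kdv_eqIII _ _ ?_, kdv_eqIV _ _ _ _ _ _ ?_ ?_⟩
    · linear_combination -(MvPolynomial.X 0 : DP) * rh - (MvPolynomial.X 0) * c2
    · linear_combination (MvPolynomial.X 0 : DP) * rh
    · rw [dx01]
      linear_combination -(MvPolynomial.X 1 : DP) * rst
    · linear_combination -(MvPolynomial.X 1 : DP) * r6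
    · rw [map_neg, dx12]
      linear_combination -(MvPolynomial.X 2 : DP) * rB + (MvPolynomial.X 2) * rD
        + 4 * (MvPolynomial.X 0 ^ 2) * rC + (MvPolynomial.X 0 ^ 2) * rA
        + (MvPolynomial.X 0 ^ 2) * rF
    · rw [dx12]
      linear_combination -(MvPolynomial.X 2 : DP) * rB + (MvPolynomial.X 2) * rI
        + 4 * (MvPolynomial.X 0 ^ 2) * rC - 3 * (MvPolynomial.X 0 ^ 2) * rA
        + (MvPolynomial.X 0 ^ 2) * rF

/-- There exist unique `a₂, a₃, b₃, a₄, h₁, h₃ ∈ R` solving the graded equations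
(i)–(iv); moreover, for this unique solution `h₁ = u⁽⁰⁾` and
`h₃ = (u⁽⁰⁾)²/4 + u⁽²⁾/12`. -/
theorem kdv_hamiltonian_densities :
    (∃! x : DP × DP × DP × DP × DP × DP,
      kdvSystem x.1 x.2.1 x.2.2.1 x.2.2.2.1 x.2.2.2.2.1 x.2.2.2.2.2) ∧
    (∀ a₂ a₃ b₃ a₄ h₁ h₃ : DP, kdvSystem a₂ a₃ b₃ a₄ h₁ h₃ →
      h₁ = MvPolynomial.X 0 ∧
      h₃ = MvPolynomial.C (4⁻¹ : ℂ) * (MvPolynomial.X 0) ^ 2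
        + MvPolynomial.C (12⁻¹ : ℂ) * MvPolynomial.X 2) := by
  constructor
  · refine ⟨⟨MvPolynomial.C (4⁻¹ : ℂ) * MvPolynomial.X 0,
      -(MvPolynomial.C (6⁻¹ : ℂ) * MvPolynomial.X 1),
      MvPolynomial.C (12⁻¹ : ℂ) * MvPolynomial.X 1,
      MvPolynomial.C (16⁻¹ : ℂ) * MvPolynomial.X 2
        + MvPolynomial.C (8⁻¹ : ℂ) * (MvPolynomial.X 0) ^ 2,
      MvPolynomial.X 0,
      MvPolynomial.C (4⁻¹ : ℂ) * (MvPolynomial.X 0) ^ 2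
        + MvPolynomial.C (12⁻¹ : ℂ) * MvPolynomial.X 2⟩, ?_, ?_⟩
    · exact (kdv_char _ _ _ _ _ _).mpr ⟨rfl, rfl, rfl, rfl, rfl, rfl⟩
    · rintro ⟨y1, y2, y3, y4, y5, y6⟩ hy
      obtain ⟨r1, r2, r3, r4, r5, r6'⟩ := (kdv_char _ _ _ _ _ _).mp hy
      simp only [Prod.mk.injEq]
      exact ⟨r1, r2, r3, r4, r5, r6'⟩
  · intro a₂ a₃ b₃ a₄ h₁ h₃ h
    obtain ⟨-, -, -, -, hh1, hh3⟩ := (kdv_char _ _ _ _ _ _).mp h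
    exact ⟨hh1, hh3⟩
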